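/- Let l > 1 and let n_1,...,n_l > 1 be integers with n = n_1 + ⋯ + n_l. Then ϑ(n) = (ϑ(n_1)⁻¹ + ⋯ + ϑ(n_l)⁻¹)⁻¹ if and only if all of n_1,...,n_l are even. -/

import Mathlib

noncomputable def theta (n : ℕ) : ℝ :=
  (1 / 2) * (((n / 2 : ℕ) : ℝ)⁻¹ + (((n + 1) / 2 : ℕ) : ℝ)⁻¹)

lemma theta_inv (n : ℕ) (h : 2 ≤ n) :
    (theta n)⁻¹ = (n : ℝ) / 2 - (if Odd n then 1 / (2 * (n:ℝ)) else 0) := by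
  rcases Nat.even_or_odd n with he | ho
  · obtain ⟨k, hk⟩ := he
    have hk1 : 1 ≤ k := by omega
    have h2 : n / 2 = k := by omega
    have h3 : (n + 1) / 2 = k := by omega
    rw [theta, h2, h3, if_neg (by simp [Nat.odd_iff, Nat.even_iff.mp ⟨k, hk⟩])]
    have hkR : (k : ℝ) ≠ 0 := by positivity
    have hn : (n : ℝ) = 2 * k := by push_cast [hk]; ring
    rw [hn]
    field_simp
    ring
  · obtain ⟨k, hk⟩ := ho
    have hk1 : 1 ≤ k := by omega
    have h2 : n / 2 = k := by omega
    have h3 : (n + 1) / 2 = k + 1 := by omega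
    rw [theta, h2, h3, if_pos ⟨k, hk⟩]
    have hkR : (0 : ℝ) < (k : ℝ) := by positivity
    have hn : (n : ℝ) = 2 * k + 1 := by push_cast [hk]; ring
    rw [hn]
    have h1 : (2 * (k : ℝ) + 1) ≠ 0 := by positivity
    field_simp
    push_cast
    ring

lemma theta_pos (n : ℕ) (h : 2 ≤ n) : 0 < theta n := by
  have h1 : (0 : ℝ) < ((n / 2 : ℕ) : ℝ) := by
    have : 1 ≤ n / 2 := by omega
    exact_mod_cast Nat.lt_of_lt_of_le Nat.zero_lt_one this
  have h2 : (0 : ℝ) < (((n + 1) / 2 : ℕ) : ℝ) := by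
    have : 1 ≤ (n + 1) / 2 := by omega
    exact_mod_cast Nat.lt_of_lt_of_le Nat.zero_lt_one this
  rw [theta]
  positivity

theorem stmt_5 (l : ℕ) (hl : 1 < l) (m : Fin l → ℕ) (hm : ∀ j, 1 < m j) :
    theta (∑ j, m j) = (∑ j, (theta (m j))⁻¹)⁻¹ ↔ ∀ j, Even (m j) := by
  have hm2 : ∀ j, 2 ≤ m j := fun j => hm j
  have hS2 : 2 ≤ ∑ j, m j := by
    have h0 : (⟨0, by omega⟩ : Fin l) ∈ Finset.univ := Finset.mem_univ _
    calc 2 ≤ m ⟨0, by omega⟩ := hm2 _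
    _ ≤ ∑ j, m j := Finset.single_le_sum (fun j _ => Nat.zero_le _) h0
  have key : (theta (∑ j, m j) = (∑ j, (theta (m j))⁻¹)⁻¹) ↔
      ((theta (∑ j, m j))⁻¹ = ∑ j, (theta (m j))⁻¹) := by
    constructor
    · intro h; rw [h, inv_inv]
    · intro h; rw [← h, inv_inv]
  rw [key]
  have eSum : ∀ j : Fin l, (theta (m j))⁻¹ =
      (m j : ℝ) / 2 - (if Odd (m j) then 1 / (2 * (m j : ℝ)) else 0) :=
    fun j => theta_inv _ (hm2 j)
  constructor
  · intro h
    by_contra hodd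
    push_neg at hodd
    obtain ⟨j0, hj0⟩ := hodd
    have hj0o : Odd (m j0) := (Nat.even_or_odd (m j0)).resolve_left hj0
    -- strict inequality
    have hlt : ∑ j, (theta (m j))⁻¹ < (theta (∑ j, m j))⁻¹ := by
      rw [theta_inv _ hS2]
      have e1 : ∑ j, (theta (m j))⁻¹ =
          ((∑ j, m j : ℕ) : ℝ) / 2 - ∑ j, (if Odd (m j) then 1 / (2 * (m j : ℝ)) else 0) := by
        rw [Finset.sum_congr rfl (fun j _ => eSum j), Finset.sum_sub_distrib]
        push_cast
        rw [Finset.sum_div]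
      rw [e1]
      apply sub_lt_sub_left
      have hnonneg : ∀ j : Fin l, (0:ℝ) ≤ (if Odd (m j) then 1 / (2 * (m j : ℝ)) else 0) := by
        intro j; split <;> positivity
      have hbound : (1 : ℝ) / (2 * (m j0 : ℝ)) ≤
          ∑ j, (if Odd (m j) then 1 / (2 * (m j : ℝ)) else 0) := by
        have := Finset.single_le_sum (f := fun j => (if Odd (m j) then 1 / (2 * (m j : ℝ)) else 0))
          (fun j _ => hnonneg j) (Finset.mem_univ j0)
        simpa [hj0o] using this
      have hmj0pos : (0:ℝ) < (m j0 : ℝ) := by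
        have := hm2 j0; positivity
      split
      · -- Odd total sum
        refine lt_of_lt_of_le ?_ hbound
        have hlt' : m j0 < ∑ j, m j := by
          obtain ⟨j1, hj1⟩ := Fintype.exists_ne_of_one_lt_card (by simpa using hl) j0
          calc m j0 < m j0 + m j1 := by have := hm2 j1; omega
          _ ≤ ∑ j, m j := by
            rw [show m j0 + m j1 = ∑ j ∈ {j0, j1}, m j by
              rw [Finset.sum_pair (by exact fun h => hj1 h.symm)]]
            exact Finset.sum_le_sum_of_subset (Finset.subset_univ _)
        have hltR : (m j0 : ℝ) < ((∑ j, m j : ℕ) : ℝ) := by exact_mod_cast hlt'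
        apply one_div_lt_one_div_of_lt (by positivity)
        linarith
      · refine lt_of_lt_of_le ?_ hbound
        positivity
    exact absurd h (ne_of_gt hlt)
  · intro h
    have hSe : ¬ Odd (∑ j, m j) :=
      Nat.not_odd_iff_even.mpr (Finset.even_sum _ (fun j _ => h j))
    rw [theta_inv _ hS2, if_neg hSe, sub_zero]
    rw [Finset.sum_congr rfl (fun j _ => eSum j)]
    have : ∀ j : Fin l, (m j : ℝ) / 2 - (if Odd (m j) then 1 / (2 * (m j : ℝ)) else 0)
        = (m j : ℝ) / 2 := by
      intro j
      rw [if_neg (Nat.not_odd_iff_even.mpr (h j)), sub_zero]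
    rw [Finset.sum_congr rfl (fun j _ => this j)]
    push_cast
    rw [Finset.sum_div]
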